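/- Let c be an asymmetric metric on {r} ∪ V. Suppose rooted paths P_1, …, P_k cover all nodes of V, each with regret c^reg(P_i) ≤ R, where P_i ends at node v_i, and suppose there is a Hamiltonian cycle through {r} ∪ V of total cost L. Then Σ_{i=1}^k (c(P_i) + c(v_i, r)) ≤ k·(R + L); consequently, there is a closed walk starting and ending at r that visits every node of V and has total cost at most k·(R + L). -/

import Mathlib

/-- Total cost of traversing the list of nodes in order. -/
def pathCost {α : Type*} (c : α → α → ℝ) : List α → ℝ
  | [] => 0
  | [_] => 0
  | a :: b :: l => c a b + pathCost c (b :: l)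

/-- A rooted path: a list of distinct nodes starting at the root `r`. -/
def IsRootedPath {α : Type*} (r : α) (w : List α) : Prop :=
  w.head? = some r ∧ w.Nodup

/-- The regret of a rooted path: its cost minus the distance from `r` to its last node. -/
def pathRegret {α : Type*} (c : α → α → ℝ) (r : α) (w : List α) : ℝ :=
  pathCost c w - c r (w.getLastD r)

section aux
variable {α : Type*} (c : α → α → ℝ)

lemma pathCost_nonneg (hnn : ∀ u v, 0 ≤ c u v) : ∀ l : List α, 0 ≤ pathCost c l
  | [] => le_refl 0
  | [_] => le_refl 0
  | a :: b :: l => by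
      have h1 := pathCost_nonneg hnn (b :: l)
      have h2 := hnn a b
      simp only [pathCost]
      linarith

lemma pathCost_cons_le (hnn : ∀ u v, 0 ≤ c u v) (a : α) (l : List α) :
    pathCost c l ≤ pathCost c (a :: l) := by
  cases l with
  | nil => simp [pathCost]
  | cons b l =>
      have := hnn a b
      simp only [pathCost]
      linarith

lemma pathCost_cons_tri (hnn : ∀ u v, 0 ≤ c u v)
    (htri : ∀ u v w, c u v ≤ c u w + c w v) (x a : α) (s : List α) :
    pathCost c (x :: s) ≤ c x a + pathCost c (a :: s) := by
  cases s with
  | nil => simpa [pathCost] using hnn x a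
  | cons y s =>
      have := htri x y a
      simp only [pathCost]
      linarith

lemma pathCost_sublist_cons (hnn : ∀ u v, 0 ≤ c u v)
    (htri : ∀ u v w, c u v ≤ c u w + c w v) {s t : List α} (h : s.Sublist t) :
    ∀ x, pathCost c (x :: s) ≤ pathCost c (x :: t) := by
  induction h with
  | slnil => intro x; exact le_refl _
  | @cons s' t' a h ih =>
      intro x
      have h1 := pathCost_cons_tri c hnn htri x a s'
      have h2 := ih a
      have h3 : pathCost c (x :: a :: t') = c x a + pathCost c (a :: t') := by
        simp [pathCost]
      linarith
  | cons_cons a h ih =>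
      intro x
      simp only [pathCost]
      linarith [ih a]

lemma pathCost_sublist (hnn : ∀ u v, 0 ≤ c u v)
    (htri : ∀ u v w, c u v ≤ c u w + c w v) {s t : List α} (h : s.Sublist t) :
    pathCost c s ≤ pathCost c t := by
  induction h with
  | slnil => exact le_refl _
  | cons a h ih => exact le_trans ih (pathCost_cons_le c hnn a _)
  | cons_cons a h ih => exact pathCost_sublist_cons c hnn htri h a

lemma pathCost_split (x : α) (B : List α) :
    ∀ A : List α, pathCost c (A ++ x :: B) = pathCost c (A ++ [x]) + pathCost c (x :: B)
  | [] => by simp [pathCost]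
  | [a] => by simp [pathCost]
  | a :: a' :: A => by
      have ih := pathCost_split x B (a' :: A)
      simp only [List.cons_append, List.append_eq, pathCost] at ih ⊢
      linarith

lemma pathCost_append_last (x d : α) :
    ∀ l : List α, l ≠ [] → pathCost c (l ++ [x]) = pathCost c l + c (l.getLastD d) x
  | [], h => absurd rfl h
  | [a], _ => by simp [pathCost]
  | a :: b :: l, _ => by
      have ih := pathCost_append_last x d (b :: l) (by simp)
      simp only [List.cons_append, List.append_eq, pathCost, List.getLastD_cons] at ih ⊢
      rw [ih]
      ring
end aux

section aux2
variable {α : Type*} (c : α → α → ℝ)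

lemma pathCost_flatten_bound (r : α) :
    ∀ Ls : List (List α), (∀ l ∈ Ls, l.head? = some r) →
      (Ls.flatten ++ [r]).head? = some r ∧
      pathCost c (Ls.flatten ++ [r]) ≤
        (Ls.map (fun l => pathCost c l + c (l.getLastD r) r)).sum
  | [], _ => by simp [pathCost]
  | l :: Ls, hhead => by
      have hl : l.head? = some r := hhead l (by simp)
      obtain ⟨l', rfl⟩ : ∃ l', l = r :: l' := by
        cases l with
        | nil => simp at hl
        | cons a l' =>
            simp only [List.head?_cons, Option.some.injEq] at hl
            exact ⟨l', by rw [hl]⟩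
      have ih := pathCost_flatten_bound r Ls (fun l hl => hhead l (by simp [hl]))
      obtain ⟨ihh, ihb⟩ := ih
      obtain ⟨B, hB⟩ : ∃ B, Ls.flatten ++ [r] = r :: B := by
        cases h : Ls.flatten ++ [r] with
        | nil => simp at h
        | cons a B =>
            rw [h] at ihh
            simp at ihh
            exact ⟨B, by rw [ihh]⟩
      constructor
      · simp
      · have hass : ((r :: l') :: Ls).flatten ++ [r] = (r :: l') ++ (Ls.flatten ++ [r]) := by
          simp
        rw [hass, hB, pathCost_split c r B ((r :: l')),
            pathCost_append_last c r r (r :: l') (by simp), ← hB]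
        simp only [List.map_cons, List.sum_cons]
        linarith
end aux2


/-- let `c` be an asymmetric metric on `{r} ∪ V`, let rooted paths
`P_1, …, P_k` cover all of `V`, each of regret at most `R` and with `P_i` ending at `v_i`,
and suppose there is a Hamiltonian cycle through `{r} ∪ V` of total cost `L`.  Then
`Σ_i (c(P_i) + c(v_i, r)) ≤ k·(R + L)`; consequently there is a closed walk starting and
ending at `r`, visiting every node, of total cost at most `k·(R + L)`. -/
theorem asymmetric_rvrp_to_atsp {α : Type*} [Fintype α] (c : α → α → ℝ) (r : α)
    (hnn : ∀ u v, 0 ≤ c u v) (hrefl : ∀ u, c u u = 0)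
    (htri : ∀ u v w, c u v ≤ c u w + c w v)
    (R L : ℝ) (k : ℕ) (P : Fin k → List α)
    (hP : ∀ i, IsRootedPath r (P i) ∧ pathRegret c r (P i) ≤ R)
    (hcov : ∀ v, v ≠ r → ∃ i, v ∈ (P i).tail)
    (l : List α) (hnodup : l.Nodup) (hall : ∀ v, v ∈ l)
    (hL : pathCost c (l ++ [l.headD r]) = L) :
    (∑ i, (pathCost c (P i) + c ((P i).getLastD r) r) ≤ k * (R + L)) ∧
    ∃ W : List α, W.head? = some r ∧ W.getLast? = some r ∧
      (∀ v, v ∈ W) ∧ pathCost c W ≤ k * (R + L) := by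
  -- rotation: the cycle starting from r has the same cost L
  obtain ⟨a, b, hab⟩ := List.append_of_mem (hall r)
  have hrot : pathCost c ((r :: (b ++ a)) ++ [r]) = L := by
    rw [hab] at hL
    cases a with
    | nil => simpa using hL
    | cons x a' =>
        have e1 : (r :: (b ++ (x :: a'))) ++ [r] = (r :: b) ++ (x :: (a' ++ [r])) := by
          simp
        have e2 : ((x :: a') ++ r :: b) ++ [((x :: a') ++ r :: b).headD r]
            = (x :: a') ++ (r :: (b ++ [x])) := by simp
        rw [e2] at hL
        rw [e1, pathCost_split c x (a' ++ [r]) (r :: b), ← hL,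
            pathCost_split c r (b ++ [x]) (x :: a')]
        simp only [List.cons_append]
        ring
  have hround : ∀ v, c r v + c v r ≤ L := by
    intro v
    by_cases hv : v = r
    · rw [hv, hrefl]
      have := pathCost_nonneg c hnn ((r :: (b ++ a)) ++ [r])
      linarith [hrot]
    · have hvl : v ∈ b ++ a := by
        have := hall v
        rw [hab] at this
        rcases List.mem_append.1 this with h | h
        · exact List.mem_append.2 (Or.inr h)
        · rcases List.mem_cons.1 h with h | h
          · exact absurd h hv
          · exact List.mem_append.2 (Or.inl h)
      obtain ⟨u, w, huw⟩ := List.append_of_mem hvl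
      have hsub : [v, r].Sublist (v :: (w ++ [r])) :=
        (List.sublist_append_right w [r]).cons₂ v
      have hsub2 : [v, r].Sublist (u ++ (v :: (w ++ [r]))) :=
        hsub.trans (List.sublist_append_right u _)
      have hsub3 : [r, v, r].Sublist ((r :: (b ++ a)) ++ [r]) := by
        have he : (r :: (b ++ a)) ++ [r] = r :: (u ++ (v :: (w ++ [r]))) := by
          rw [huw]; simp
        rw [he]
        exact hsub2.cons₂ r
      have hle := pathCost_sublist c hnn htri hsub3
      simp only [pathCost] at hle
      linarith [hrot]
  have hterm : ∀ i : Fin k, pathCost c (P i) + c ((P i).getLastD r) r ≤ R + L := by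
    intro i
    obtain ⟨⟨hh, -⟩, hreg⟩ := hP i
    simp only [pathRegret] at hreg
    have := hround ((P i).getLastD r)
    linarith
  have hsum : ∑ i, (pathCost c (P i) + c ((P i).getLastD r) r) ≤ k * (R + L) := by
    calc ∑ i, (pathCost c (P i) + c ((P i).getLastD r) r) ≤ ∑ _i : Fin k, (R + L) :=
          Finset.sum_le_sum fun i _ => hterm i
      _ = k * (R + L) := by
          rw [Finset.sum_const, Finset.card_univ, Fintype.card_fin, nsmul_eq_mul]
  refine ⟨hsum, ?_⟩
  set Ls := List.ofFn P with hLs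
  have hheads : ∀ m ∈ Ls, m.head? = some r := by
    intro m hm
    rw [hLs, List.mem_ofFn] at hm
    obtain ⟨i, rfl⟩ := hm
    exact (hP i).1.1
  obtain ⟨hW1, hW2⟩ := pathCost_flatten_bound c r Ls hheads
  refine ⟨Ls.flatten ++ [r], hW1, ?_, ?_, ?_⟩
  · simp
  · intro v
    by_cases hv : v = r
    · subst hv; simp
    · obtain ⟨i, hvi⟩ := hcov v hv
      have hvP : v ∈ P i := List.mem_of_mem_tail hvi
      have hPLs : P i ∈ Ls := by rw [hLs, List.mem_ofFn]; exact ⟨i, rfl⟩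
      exact List.mem_append.2 (Or.inl (List.mem_flatten.2 ⟨P i, hPLs, hvP⟩))
  · refine le_trans hW2 ?_
    have : (Ls.map (fun m => pathCost c m + c (m.getLastD r) r)).sum
        = ∑ i, (pathCost c (P i) + c ((P i).getLastD r) r) := by
      rw [hLs, List.map_ofFn, List.sum_ofFn]
      rfl
    rw [this]
    exact hsum
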